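/- arXiv:2106.02237 — 4 statements merged into one kernel-verified Lean document; each statement's English description precedes it below -/
import Mathlib

section
/- For every t ≥ 1 with ε_t ≠ 0, the MAMP LMLE output satisfies r_t = (1/ε_t)(F_t y + Σ_{i=1}^{t} H_{t,i} x_i), for arbitrary vectors y ∈ ℂ^M and x_1, …, x_t ∈ ℂ^N. -/
open Matrix Finset


private lemma mulVec_sum' {m n ι : Type*} [Fintype n] (M : Matrix m n ℂ)
    (s : Finset ι) (f : ι → n → ℂ) :
    M *ᵥ ∑ i ∈ s, f i = ∑ i ∈ s, M *ᵥ f i := by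
  simp only [← Matrix.mulVecLin_apply]
  exact map_sum M.mulVecLin f s

private lemma sum_mulVec' {m n ι : Type*} [Fintype n] (s : Finset ι)
    (f : ι → Matrix m n ℂ) (v : n → ℂ) :
    (∑ i ∈ s, f i) *ᵥ v = ∑ i ∈ s, f i *ᵥ v := by
  ext j
  simp only [Matrix.mulVec, dotProduct, Finset.sum_apply, Finset.sum_apply',
    Finset.sum_mul, Matrix.sum_apply]
  rw [Finset.sum_comm]

/-- for every `t ≥ 1` with `ε_t ≠ 0`, the MAMP LMLE output satisfies
`r_t = (1/ε_t)(F_t y + ∑_{i=1}^t H_{t,i} x_i)`. -/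
theorem mamp_lmle_closed_form
    (M N : ℕ) (hM : 0 < M) (hN : 0 < N)
    (A : Matrix (Fin M) (Fin N) ℂ) (lamd : ℝ)
    (B : Matrix (Fin M) (Fin M) ℂ)
    (hB : B = (lamd : ℂ) • (1 : Matrix (Fin M) (Fin M) ℂ) - A * Aᴴ)
    (W : ℕ → Matrix (Fin N) (Fin N) ℂ) (hW : ∀ t, W t = Aᴴ * B ^ t * A)
    (w : ℕ → ℂ) (hw : ∀ t, w t = (N : ℂ)⁻¹ * (W t).trace)
    (θ ξ : ℕ → ℝ)
    (ϑ : ℕ → ℕ → ℝ)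
    (hϑ : ∀ t i, 1 ≤ i → i ≤ t → ϑ t i = ξ i * ∏ τ ∈ Finset.Icc (i + 1) t, θ τ)
    (p : ℕ → ℕ → ℂ)
    (hp : ∀ t i, 1 ≤ i → i ≤ t → p t i = (ϑ t i : ℂ) * w (t - i))
    (ε : ℕ → ℂ) (hε : ∀ t, 1 ≤ t → ε t = ∑ i ∈ Finset.Icc 1 t, p t i)
    (F : ℕ → Matrix (Fin N) (Fin M) ℂ)
    (hF : ∀ t, 1 ≤ t → F t = ∑ i ∈ Finset.Icc 1 t, (ϑ t i : ℂ) • (Aᴴ * B ^ (t - i)))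
    (H : ℕ → ℕ → Matrix (Fin N) (Fin N) ℂ)
    (hH : ∀ t i, 1 ≤ i → i ≤ t →
      H t i = (ϑ t i : ℂ) • (w (t - i) • (1 : Matrix (Fin N) (Fin N) ℂ) - W (t - i)))
    (y : Fin M → ℂ) (x : ℕ → Fin N → ℂ)
    (rhat : ℕ → Fin M → ℂ)
    (h0 : rhat 0 = 0)
    (hrec : ∀ t, 1 ≤ t →
      rhat t = (θ t : ℂ) • (B *ᵥ rhat (t - 1)) + (ξ t : ℂ) • (y - A *ᵥ x t))
    (r : ℕ → Fin N → ℂ)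
    (hr : ∀ t, 1 ≤ t → ε t ≠ 0 →
      r t = (ε t)⁻¹ • (Aᴴ *ᵥ rhat t + ∑ i ∈ Finset.Icc 1 t, p t i • x i))
    (t : ℕ) (ht : 1 ≤ t) (hεt : ε t ≠ 0) :
    r t = (ε t)⁻¹ • ((F t) *ᵥ y + ∑ i ∈ Finset.Icc 1 t, (H t i) *ᵥ x i) := by

  -- closed form for rhat
  have key : ∀ s, 1 ≤ s →
      rhat s = ∑ i ∈ Finset.Icc 1 s, (ϑ s i : ℂ) • (B ^ (s - i) *ᵥ (y - A *ᵥ x i)) := by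
    intro s hs
    induction s, hs using Nat.le_induction with
    | base =>
        rw [hrec 1 le_rfl, h0]
        simp [hϑ 1 1 le_rfl le_rfl, Finset.Icc_self,
          show Finset.Icc 2 1 = ∅ by rfl]
    | succ n hn ih =>
        rw [hrec (n + 1) (by omega)]
        simp only [Nat.add_sub_cancel]
        rw [Finset.sum_Icc_succ_top (by omega : 1 ≤ n + 1)]
        have hlast : (ϑ (n + 1) (n + 1) : ℂ) = (ξ (n + 1) : ℂ) := by
          rw [hϑ (n+1) (n+1) (by omega) le_rfl]
          simp [show Finset.Icc (n+2) (n+1) = ∅ from Finset.Icc_eq_empty (by omega)]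
        rw [hlast]
        simp only [Nat.sub_self, pow_zero, Matrix.one_mulVec]
        congr 1
        rw [ih, mulVec_sum', Finset.smul_sum]
        refine Finset.sum_congr rfl ?_
        intro i hi
        simp only [Finset.mem_Icc] at hi
        rw [hϑ (n+1) i (by omega) (by omega), hϑ n i (by omega) (by omega)]
        rw [Finset.prod_Icc_succ_top (by omega : i + 1 ≤ n + 1)]
        rw [Matrix.mulVec_smul, Matrix.mulVec_mulVec,
          show n + 1 - i = (n - i) + 1 by omega, pow_succ', smul_smul]
        push_cast
        ring_nf
  rw [hr t ht hεt, key t ht]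
  congr 1
  rw [hF t ht, mulVec_sum', sum_mulVec', ← Finset.sum_add_distrib,
    ← Finset.sum_add_distrib]
  refine Finset.sum_congr rfl ?_
  intro i hi
  simp only [Finset.mem_Icc] at hi
  rw [hH t i hi.1 hi.2, hp t i hi.1 hi.2, hW (t - i)]
  rw [Matrix.mulVec_smul, Matrix.mulVec_mulVec, Matrix.smul_mulVec,
    Matrix.smul_mulVec, Matrix.sub_mulVec, Matrix.smul_mulVec,
    Matrix.one_mulVec, Matrix.mulVec_sub, Matrix.mulVec_mulVec]
  rw [smul_sub, smul_sub, smul_smul]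
  abel
end

section
/- Let 0 ≤ a ≤ b and ρ > 0 be real numbers, and define h(c) = max(c − a, b − c)/(c + ρ) for c > −ρ. Then for every c > −ρ one has h(c) ≥ (b − a)/(a + b + 2ρ), with equality at c = (a + b)/2. In other words, the midpoint c = (a+b)/2 minimizes the worst-case ratio max_{μ ∈ [a,b]} |c − μ|/(c + ρ), whose minimal value is (b − a)/(a + b + 2ρ). -/
/-- for `0 ≤ a ≤ b`, `ρ > 0` and `h(c) = max(c - a, b - c)/(c + ρ)`,
every `c > -ρ` satisfies `h(c) ≥ (b - a)/(a + b + 2ρ)`, with equality at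
`c = (a + b)/2`. -/
theorem midpoint_minimizes_worst_case_ratio
    (a b ρ : ℝ) (ha : 0 ≤ a) (hab : a ≤ b) (hρ : 0 < ρ) :
    (∀ c : ℝ, -ρ < c →
      (b - a) / (a + b + 2 * ρ) ≤ max (c - a) (b - c) / (c + ρ)) ∧
    max ((a + b) / 2 - a) (b - (a + b) / 2) / ((a + b) / 2 + ρ)
      = (b - a) / (a + b + 2 * ρ) := by
  have hd : 0 < a + b + 2 * ρ := by linarith
  constructor
  · intro c hc
    have hc' : 0 < c + ρ := by linarith
    rw [div_le_div_iff₀ hd hc']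
    rcases le_total c ((a + b) / 2) with h | h
    · have hm : b - c ≤ max (c - a) (b - c) := le_max_right _ _
      nlinarith [le_max_right (c - a) (b - c)]
    · nlinarith [le_max_left (c - a) (b - c)]
  · have h1 : (a + b) / 2 - a = b - (a + b) / 2 := by ring
    rw [h1, max_self]
    rw [div_eq_div_iff (by linarith) hd.ne']
    ring
end

section
/- Let V ∈ ℝ^{L×L} be a symmetric positive definite matrix and 1 ∈ ℝ^L the all-ones vector. Then for every index i, 1/(1ᵀ V^{−1} 1) ≤ V_{ii}. In particular, the minimal constrained variance min{ζᵀ V ζ : 1ᵀ ζ = 1} never exceeds any diagonal entry of V, so the MSE of the optimally damped output is not worse than the MSE of any single preceding estimate. -/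
open Matrix

/-- for a symmetric positive definite `V` and the all-ones vector `𝟏`,
`1/(𝟏ᵀ V⁻¹ 𝟏) ≤ V_{ii}` for every index `i`. -/
theorem optimal_damping_not_worse_than_diagonal
    (L : ℕ) (hL : 0 < L)
    (V : Matrix (Fin L) (Fin L) ℝ) (hsym : V.IsSymm) (hV : V.PosDef)
    (i : Fin L) :
    1 / dotProduct (fun _ => (1 : ℝ)) (V⁻¹ *ᵥ (fun _ => (1 : ℝ))) ≤ V i i := by
  set one : Fin L → ℝ := fun _ => (1 : ℝ) with hone
  set u : Fin L → ℝ := V⁻¹ *ᵥ one with hu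
  set q : ℝ := dotProduct one u with hq
  have hone_ne : one ≠ 0 := by
    intro h
    have := congrFun h ⟨0, hL⟩
    simp [hone] at this
  have hqpos : 0 < q := by
    have hinv : (V⁻¹).PosDef := hV.inv
    have := hinv.dotProduct_mulVec_pos hone_ne
    simpa [hq, hu, dotProduct] using this
  have hVu : V *ᵥ u = one := by
    have hdet : IsUnit V.det := isUnit_iff_ne_zero.mpr (ne_of_gt hV.det_pos)
    rw [hu, Matrix.mulVec_mulVec, Matrix.mul_nonsing_inv V hdet, Matrix.one_mulVec]
  -- ζ := e_i - q⁻¹ • u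
  set e : Fin L → ℝ := Pi.single i 1 with he
  set z : Fin L → ℝ := e - q⁻¹ • u with hz
  have hpsd : 0 ≤ dotProduct z (V *ᵥ z) := by
    have := hV.posSemidef.dotProduct_mulVec_nonneg z
    simpa [dotProduct] using this
  have h1 : dotProduct e (V *ᵥ e) = V i i := by
    simp [he, Matrix.mulVec_single, single_dotProduct]
  have h2 : dotProduct e (V *ᵥ u) = 1 := by
    rw [hVu]; simp [he, single_dotProduct, hone]
  have h3 : dotProduct u (V *ᵥ e) = 1 := by
    rw [Matrix.dotProduct_mulVec, ← Matrix.mulVec_transpose, hsym.eq, hVu]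
    simp [he, hone, dotProduct_single]
  have h4 : dotProduct u (V *ᵥ u) = q := by
    rw [hVu, dotProduct_comm]
  have hexp : dotProduct z (V *ᵥ z) = V i i - q⁻¹ := by
    rw [hz, Matrix.mulVec_sub, Matrix.mulVec_smul, sub_dotProduct,
      dotProduct_sub, dotProduct_sub, smul_dotProduct,
      smul_dotProduct, dotProduct_smul, dotProduct_smul,
      h1, h2, h3, h4]
    simp only [smul_eq_mul]
    field_simp
    ring
  have : 0 ≤ V i i - q⁻¹ := hexp ▸ hpsd
  have := sub_nonneg.mp this
  calc 1 / q = q⁻¹ := one_div q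
    _ ≤ V i i := this
end

section
/- Let (Ω, 𝔉, ℙ) be a probability space and X, N : Ω → ℝ square-integrable random variables. Set R = X + N and let X̂ = E[X | σ(R)] be the conditional expectation of X given the σ-algebra generated by R. Then E[(X̂ − X)·N] = E[(X̂ − X)²]; i.e., the correlation between the MMSE estimation error and the additive noise equals the mean-square error. -/
open MeasureTheory ProbabilityTheory

private theorem integrable_mul_of_memL2 {α : Type*} {m0 : MeasurableSpace α} {μ : Measure α}
    {f g : α → ℝ} (hf : MemLp f 2 μ) (hg : MemLp g 2 μ) :
    Integrable (fun x => f x * g x) μ := by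
  have h := (((hf.add hg).integrable_sq.sub hf.integrable_sq).sub hg.integrable_sq).div_const 2
  refine h.congr (Filter.Eventually.of_forall fun x => ?_)
  simp only [Pi.sub_apply, Pi.add_apply]
  ring

private theorem memL2_condexp {α : Type*} {m m0 : MeasurableSpace α} {μ : Measure α}
    [IsFiniteMeasure μ] (hm : m ≤ m0) {f : α → ℝ} (hf : MemLp f 2 μ) :
    MemLp (μ[f|m]) 2 μ := by
  haveI : SigmaFinite (μ.trim hm) := inferInstance
  set g : α → ℝ := ((condExpL2 ℝ ℝ hm (hf.toLp f) : α →₂[μ] ℝ) : α → ℝ) with hg_def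
  have hg : MemLp g 2 μ := Lp.memLp _
  have h_eq : g =ᵐ[μ] μ[f|m] := by
    refine ae_eq_condExp_of_forall_setIntegral_eq hm (hf.integrable one_le_two)
      (fun s _ _ => (hg.integrable one_le_two).integrableOn) (fun s hs hμs => ?_)
      (aestronglyMeasurable_condExpL2 hm _)
    rw [integral_condExpL2_eq_of_fin_meas_real _ hs hμs.ne]
    exact setIntegral_congr_ae (hm s hs) ((MemLp.coeFn_toLp hf).mono fun x hx _ => hx)
  exact hg.ae_eq h_eq

/-- for square-integrable `X, N` with `R = X + N` and
`X̂ = E[X | σ(R)]`, one has `E[(X̂ - X)·N] = E[(X̂ - X)²]`. -/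
theorem mmse_error_noise_correlation
    {Ω : Type*} [MeasureSpace Ω] (hP : IsProbabilityMeasure (ℙ : Measure Ω))
    (X N : Ω → ℝ) (hXm : Measurable X) (hNm : Measurable N)
    (hX2 : MemLp X 2 (ℙ : Measure Ω)) (hN2 : MemLp N 2 (ℙ : Measure Ω))
    (R : Ω → ℝ) (hR : R = X + N)
    (Xhat : Ω → ℝ)
    (hXhat : Xhat = (ℙ : Measure Ω)[X | MeasurableSpace.comap R inferInstance]) :
    ∫ ω, (Xhat ω - X ω) * N ω ∂(ℙ : Measure Ω)
      = ∫ ω, (Xhat ω - X ω) ^ 2 ∂(ℙ : Measure Ω) := by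
  set μ := (ℙ : Measure Ω) with hμ_def
  have hRm : Measurable R := by rw [hR]; exact hXm.add hNm
  have hm : MeasurableSpace.comap R inferInstance ≤ ‹MeasureSpace Ω›.toMeasurableSpace :=
    hRm.comap_le
  haveI : SigmaFinite (μ.trim hm) := inferInstance
  have hR2 : MemLp R 2 μ := by rw [hR]; exact hX2.add hN2
  have hXhat2 : MemLp Xhat 2 μ := by rw [hXhat]; exact memL2_condexp hm hX2
  -- Z = R - Xhat is σ(R)-strongly measurable and in L²
  set Z : Ω → ℝ := fun ω => R ω - Xhat ω with hZ_def
  have hZ2 : MemLp Z 2 μ := hR2.sub hXhat2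
  have hRm' : StronglyMeasurable[MeasurableSpace.comap R inferInstance] R :=
    (measurable_iff_comap_le.mpr le_rfl).stronglyMeasurable
  have hXhatm : StronglyMeasurable[MeasurableSpace.comap R inferInstance] Xhat := by
    rw [hXhat]; exact stronglyMeasurable_condExp
  have hZm : StronglyMeasurable[MeasurableSpace.comap R inferInstance] Z := hRm'.sub hXhatm
  -- orthogonality: ∫ Z * Xhat = ∫ Z * X
  have hZX_int : Integrable (fun ω => Z ω * X ω) μ := integrable_mul_of_memL2 hZ2 hX2
  have hZXhat_int : Integrable (fun ω => Z ω * Xhat ω) μ := integrable_mul_of_memL2 hZ2 hXhat2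
  have h_orth : ∫ ω, Z ω * Xhat ω ∂μ = ∫ ω, Z ω * X ω ∂μ := by
    have hpull : μ[Z * X|MeasurableSpace.comap R inferInstance]
        =ᵐ[μ] Z * μ[X|MeasurableSpace.comap R inferInstance] :=
      condExp_mul_of_stronglyMeasurable_left hZm hZX_int (hX2.integrable one_le_two)
    have h1 : ∫ ω, (μ[Z * X|MeasurableSpace.comap R inferInstance]) ω ∂μ
        = ∫ ω, Z ω * X ω ∂μ := integral_condExp hm
    have h2 : ∫ ω, (μ[Z * X|MeasurableSpace.comap R inferInstance]) ω ∂μ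
        = ∫ ω, Z ω * Xhat ω ∂μ := by
      refine integral_congr_ae (hpull.trans ?_)
      filter_upwards [] with ω
      rw [hXhat]
      rfl
    rw [← h2, h1]
  -- expand: (Xhat - X) * N = (Xhat - X) * Z + (Xhat - X)^2
  have hE2 : MemLp (fun ω => Xhat ω - X ω) 2 μ := hXhat2.sub hX2
  have hEZ_int : Integrable (fun ω => (Xhat ω - X ω) * Z ω) μ :=
    integrable_mul_of_memL2 hE2 hZ2
  have hEsq_int : Integrable (fun ω => (Xhat ω - X ω) ^ 2) μ := hE2.integrable_sq
  have hN_eq : ∀ ω, N ω = R ω - X ω := by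
    intro ω; rw [hR]; simp
  have hsplit : ∀ ω, (Xhat ω - X ω) * N ω = (Xhat ω - X ω) * Z ω + (Xhat ω - X ω) ^ 2 := by
    intro ω; rw [hN_eq ω, hZ_def]; ring
  calc ∫ ω, (Xhat ω - X ω) * N ω ∂μ
      = ∫ ω, ((Xhat ω - X ω) * Z ω + (Xhat ω - X ω) ^ 2) ∂μ :=
        integral_congr_ae (Filter.Eventually.of_forall hsplit)
    _ = (∫ ω, (Xhat ω - X ω) * Z ω ∂μ) + ∫ ω, (Xhat ω - X ω) ^ 2 ∂μ :=
        integral_add hEZ_int hEsq_int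
    _ = ∫ ω, (Xhat ω - X ω) ^ 2 ∂μ := by
        have hz : ∫ ω, (Xhat ω - X ω) * Z ω ∂μ = 0 := by
          have hexp : ∀ ω, (Xhat ω - X ω) * Z ω = Z ω * Xhat ω - Z ω * X ω := by
            intro ω; ring
          rw [integral_congr_ae (Filter.Eventually.of_forall hexp),
            integral_sub hZXhat_int hZX_int, h_orth, sub_self]
        rw [hz, zero_add]
end
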